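/- arXiv:1002.5041 — 2 statements merged into one kernel-verified Lean document; each statement's English description precedes it below -/
import Mathlib

section
/- Let n(z) = (2π)^{-1/2} e^{-z²/2} be the standard normal density. For every finite signed measure ω on ℝ that is antisymmetric (i.e., the pushforward of ω by z ↦ −z equals −ω) and has total variation norm ‖ω‖_TV = 1, one has ∫ z n(z) ω(dz) ≤ n(1) = e^{-1/2}/√(2π). Equality holds for the risk-reversal measure ω = ½(δ₁ − δ_{−1}). -/
open MeasureTheory Set
open scoped ENNReal

/-- Integral of a function with respect to a finite signed measure, defined via
the Jordan decomposition. -/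
noncomputable def signedIntegral (f : ℝ → ℝ) (ω : SignedMeasure ℝ) : ℝ :=
  (∫ x, f x ∂ω.toJordanDecomposition.posPart)
    - (∫ x, f x ∂ω.toJordanDecomposition.negPart)

/-- The standard normal density. -/
noncomputable def stdNormalDensity (z : ℝ) : ℝ :=
  (Real.sqrt (2 * Real.pi))⁻¹ * Real.exp (-z ^ 2 / 2)

lemma abs_f_le (z : ℝ) :
    ‖z * stdNormalDensity z‖ ≤ Real.exp (-(1:ℝ)/2) / Real.sqrt (2 * Real.pi) := by
  have hπ : 0 < Real.sqrt (2 * Real.pi) :=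
    Real.sqrt_pos.2 (by positivity)
  have key : |z| * Real.exp (-z ^ 2 / 2) ≤ Real.exp (-(1:ℝ)/2) := by
    have h1 : |z| ≤ Real.exp ((z ^ 2 - 1) / 2) := by
      have := Real.add_one_le_exp ((z ^ 2 - 1) / 2)
      nlinarith [sq_nonneg (|z| - 1), sq_abs z]
    calc |z| * Real.exp (-z ^ 2 / 2)
        ≤ Real.exp ((z ^ 2 - 1) / 2) * Real.exp (-z ^ 2 / 2) := by
          exact mul_le_mul_of_nonneg_right h1 (Real.exp_pos _).le
      _ = Real.exp (-(1:ℝ)/2) := by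
          rw [← Real.exp_add]; ring_nf
  have : ‖z * stdNormalDensity z‖ = |z| * Real.exp (-z ^ 2 / 2) / Real.sqrt (2 * Real.pi) := by
    rw [Real.norm_eq_abs, stdNormalDensity, abs_mul, abs_mul, abs_of_pos (Real.exp_pos _),
      abs_of_pos (inv_pos.2 hπ)]
    ring
  rw [this]
  gcongr

/-- Among antisymmetric unit total-variation signed measures,
`∫ z n(z) ω(dz) ≤ n(1) = e^{-1/2}/√(2π)`, with equality for the risk reversal
`ω = ½(δ₁ − δ₋₁)`. -/
theorem risk_reversal_optimal_among_antisymmetric :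
    (∀ ω : SignedMeasure ℝ,
      ω.map (fun z : ℝ => -z) = -ω →
      ω.totalVariation univ = 1 →
      signedIntegral (fun z => z * stdNormalDensity z) ω ≤
        Real.exp (-(1:ℝ)/2) / Real.sqrt (2 * Real.pi)) ∧
    (∀ ωRR : SignedMeasure ℝ,
      ωRR = (1/2 : ℝ) • ((Measure.dirac (1:ℝ)).toSignedMeasure
              - (Measure.dirac (-1:ℝ)).toSignedMeasure) →
      ωRR.map (fun z : ℝ => -z) = -ωRR ∧
      ωRR.totalVariation univ = 1 ∧
      signedIntegral (fun z => z * stdNormalDensity z) ωRR =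
        Real.exp (-(1:ℝ)/2) / Real.sqrt (2 * Real.pi)) := by
  set M : ℝ := Real.exp (-(1:ℝ)/2) / Real.sqrt (2 * Real.pi) with hM
  have hM0 : 0 ≤ M := by positivity
  constructor
  · intro ω _ hTV
    set μp := ω.toJordanDecomposition.posPart
    set μn := ω.toJordanDecomposition.negPart
    have hp : ‖∫ x, x * stdNormalDensity x ∂μp‖ ≤ M * (μp univ).toReal :=
      norm_integral_le_of_norm_le_const (ae_of_all _ abs_f_le)
    have hn : ‖∫ x, x * stdNormalDensity x ∂μn‖ ≤ M * (μn univ).toReal :=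
      norm_integral_le_of_norm_le_const (ae_of_all _ abs_f_le)
    have hsum : (μp univ).toReal + (μn univ).toReal = 1 := by
      have : μp univ + μn univ = 1 := by
        rw [SignedMeasure.totalVariation] at hTV
        simpa using hTV
      have h1 : μp univ ≠ ⊤ := measure_ne_top _ _
      have h2 : μn univ ≠ ⊤ := measure_ne_top _ _
      rw [← ENNReal.toReal_add h1 h2, this, ENNReal.toReal_one]
    have h1 := (le_abs_self _).trans hp
    have h2 := (neg_le_abs _).trans hn
    rw [signedIntegral]
    calc (∫ x, x * stdNormalDensity x ∂μp) - (∫ x, x * stdNormalDensity x ∂μn)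
        ≤ M * (μp univ).toReal + M * (μn univ).toReal := by
          rw [Real.norm_eq_abs] at hp hn
          have := abs_le.1 hp
          have := abs_le.1 hn
          linarith [(abs_le.1 hp).1, (abs_le.1 hp).2, (abs_le.1 hn).1, (abs_le.1 hn).2]
      _ = M := by rw [← mul_add, hsum, mul_one]
  · intro ωRR hω
    -- Jordan decomposition of the risk reversal
    have hfin1 : IsFiniteMeasure ((1/2 : ℝ≥0∞) • Measure.dirac (1:ℝ)) := by
      constructor
      simp [Measure.smul_apply]
    have hfin2 : IsFiniteMeasure ((1/2 : ℝ≥0∞) • Measure.dirac (-1:ℝ)) := by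
      constructor
      simp [Measure.smul_apply]
    have hsing : ((1/2 : ℝ≥0∞) • Measure.dirac (1:ℝ)) ⟂ₘ ((1/2 : ℝ≥0∞) • Measure.dirac (-1:ℝ)) := by
      refine Measure.MutuallySingular.smul _ (Measure.MutuallySingular.smul _ ?_).symm |>.symm
      refine ⟨{(-1:ℝ)}, measurableSet_singleton (-1), ?_, ?_⟩
      · simp [Measure.dirac_apply, Set.indicator_apply]
        norm_num
      · simp [Measure.dirac_apply, Set.indicator_apply]
    let J : MeasureTheory.JordanDecomposition ℝ :=
      @MeasureTheory.JordanDecomposition.mk ℝ _ ((1/2 : ℝ≥0∞) • Measure.dirac (1:ℝ))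
        ((1/2 : ℝ≥0∞) • Measure.dirac (-1:ℝ)) hfin1 hfin2 hsing
    have hJ : ωRR = J.toSignedMeasure := by
      rw [hω]
      ext i hi
      rw [MeasureTheory.JordanDecomposition.toSignedMeasure]
      rw [VectorMeasure.smul_apply, VectorMeasure.sub_apply, VectorMeasure.sub_apply,
        Measure.toSignedMeasure_apply_measurable hi,
        Measure.toSignedMeasure_apply_measurable hi,
        Measure.toSignedMeasure_apply_measurable hi,
        Measure.toSignedMeasure_apply_measurable hi]
      show (1/2 : ℝ) * _ = _
      simp only [J, measureReal_def, Measure.smul_apply, smul_eq_mul, ENNReal.toReal_mul]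
      norm_num
      ring
    have hJD : ωRR.toJordanDecomposition = J :=
      MeasureTheory.SignedMeasure.toJordanDecomposition_eq hJ
    refine ⟨?_, ?_, ?_⟩
    · -- antisymmetry
      ext i hi
      rw [VectorMeasure.map_apply _ measurable_neg hi, VectorMeasure.neg_apply, hω]
      rw [VectorMeasure.smul_apply, VectorMeasure.smul_apply,
        VectorMeasure.sub_apply, VectorMeasure.sub_apply,
        Measure.toSignedMeasure_apply_measurable (measurable_neg hi),
        Measure.toSignedMeasure_apply_measurable (measurable_neg hi),
        Measure.toSignedMeasure_apply_measurable hi,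
        Measure.toSignedMeasure_apply_measurable hi]
      have e1 : Measure.dirac (1:ℝ) ((fun z : ℝ => -z) ⁻¹' i) = Measure.dirac (-1:ℝ) i := by
        rw [Measure.dirac_apply, Measure.dirac_apply]
        by_cases h : (-1:ℝ) ∈ i <;>
          simp [Set.indicator_apply, Set.mem_neg, Set.mem_preimage, h]
      have e2 : Measure.dirac (-1:ℝ) ((fun z : ℝ => -z) ⁻¹' i) = Measure.dirac (1:ℝ) i := by
        rw [Measure.dirac_apply, Measure.dirac_apply]
        by_cases h : (1:ℝ) ∈ i <;>
          simp [Set.indicator_apply, Set.mem_neg, Set.mem_preimage, h]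
      simp only [measureReal_def]
      rw [e1, e2]
      show (1/2 : ℝ) * _ = -((1/2 : ℝ) * _)
      ring
    · -- total variation
      rw [SignedMeasure.totalVariation, hJD]
      show ((1/2 : ℝ≥0∞) • Measure.dirac (1:ℝ) + (1/2 : ℝ≥0∞) • Measure.dirac (-1:ℝ)) univ = 1
      rw [Measure.add_apply]
      simp [Measure.smul_apply]
      exact ENNReal.inv_two_add_inv_two
    · -- the value
      rw [signedIntegral, hJD]
      show (∫ x, x * stdNormalDensity x ∂((1/2 : ℝ≥0∞) • Measure.dirac (1:ℝ)))
          - (∫ x, x * stdNormalDensity x ∂((1/2 : ℝ≥0∞) • Measure.dirac (-1:ℝ))) = M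
      rw [integral_smul_measure, integral_smul_measure, integral_dirac, integral_dirac]
      have ht : ((1/2 : ℝ≥0∞)).toReal = (1/2 : ℝ) := by simp
      rw [ht]
      simp only [smul_eq_mul, stdNormalDensity]
      rw [hM]
      have : ((-1 : ℝ)) ^ 2 = 1 := by norm_num
      rw [this]
      norm_num
      rw [div_eq_inv_mul]
      ring
end

section
/- Let n(z) = (2π)^{-1/2} e^{-z²/2} be the standard normal density and let z₀ be the unique positive solution of (z₀²/2)e^{z₀²/2} = e^{z₀²/2} + 1. For every finite signed measure ω on ℝ that is symmetric (i.e., invariant under the pushforward by z ↦ −z), has total variation norm ‖ω‖_TV = 1 and satisfies ∫ n(z) ω(dz) = 0, one has ∫ z² n(z) ω(dz) ≤ (2/√(2π)) e^{-z₀²/2}. Equality holds for the butterfly measure ω = x₀ δ_{z₀} + x₀ δ_{−z₀} − (1−2x₀) δ₀ with x₀ = 1/(2(1+e^{-z₀²/2})). -/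
open MeasureTheory Set

/-- `u * exp(-u/2) ≤ 2/e` for all real `u`. -/
lemma aux_u_exp (u : ℝ) : u * Real.exp (-u / 2) ≤ 2 * Real.exp (-1) := by
  have h := Real.add_one_le_exp (u / 2 - 1)
  have h2 : u / 2 ≤ Real.exp (u / 2) * Real.exp (-1) := by
    rw [← Real.exp_add]
    have : u / 2 + -1 = u / 2 - 1 := by ring
    rw [this]; linarith [h]
  have h3 : 0 < Real.exp (-u / 2) := Real.exp_pos _
  have h4 : Real.exp (u / 2) * Real.exp (-u / 2) = 1 := by
    rw [← Real.exp_add]; ring_nf; exact Real.exp_zero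
  nlinarith [Real.exp_pos (-1 : ℝ)]

/-- Core pointwise inequality. -/
lemma aux_pointwise (t : ℝ) (ht : t / 2 = 1 + Real.exp (-t / 2)) (s : ℝ) (hs : 0 ≤ s) :
    |(s - (t - 2)) * Real.exp (-s / 2)| ≤ 2 * Real.exp (-t / 2) := by
  set L : ℝ := t - 2 with hL
  have hLE : L = 2 * Real.exp (-t / 2) := by rw [hL]; linarith
  have hLpos : 0 < L := by rw [hLE]; positivity
  rw [abs_le]
  constructor
  · rw [← hLE]
    rcases le_or_gt L s with h | h
    · nlinarith [Real.exp_pos (-s / 2)]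
    · have he1 : Real.exp (-s / 2) ≤ 1 := by
        rw [Real.exp_le_one_iff]; linarith
      nlinarith [Real.exp_pos (-s / 2)]
  · have hsplit : Real.exp (-s / 2) = Real.exp (-(s - L) / 2) * Real.exp (-L / 2) := by
      rw [← Real.exp_add]; ring_nf
    have hu := aux_u_exp (s - L)
    have ht2 : Real.exp (-t / 2) = Real.exp (-1) * Real.exp (-L / 2) := by
      rw [← Real.exp_add]; congr 1; rw [hL]; ring
    rw [hsplit, ht2]
    have hp : 0 < Real.exp (-L / 2) := Real.exp_pos _
    calc (s - L) * (Real.exp (-(s - L) / 2) * Real.exp (-L / 2))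
        = ((s - L) * Real.exp (-(s - L) / 2)) * Real.exp (-L / 2) := by ring
      _ ≤ (2 * Real.exp (-1)) * Real.exp (-L / 2) :=
          mul_le_mul_of_nonneg_right hu hp.le
      _ = 2 * (Real.exp (-1) * Real.exp (-L / 2)) := by ring

lemma integrable_of_bdd {μ : Measure ℝ} [IsFiniteMeasure μ] {f : ℝ → ℝ} (hc : Continuous f)
    {C : ℝ} (hb : ∀ z, |f z| ≤ C) : Integrable f μ :=
  (integrable_const C).mono' hc.aestronglyMeasurable (ae_of_all _ fun z => by
    simpa using hb z)

lemma signedIntegral_le_of_bound (ω : SignedMeasure ℝ) (g : ℝ → ℝ) (C : ℝ)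
    (hb : ∀ z, |g z| ≤ C) (htv : ω.totalVariation univ = 1) :
    signedIntegral g ω ≤ C := by
  set μp := ω.toJordanDecomposition.posPart
  set μn := ω.toJordanDecomposition.negPart
  have hp : ‖∫ x, g x ∂μp‖ ≤ C * (μp univ).toReal :=
    norm_integral_le_of_norm_le_const (ae_of_all _ fun z => by simpa using hb z)
  have hn : ‖∫ x, g x ∂μn‖ ≤ C * (μn univ).toReal :=
    norm_integral_le_of_norm_le_const (ae_of_all _ fun z => by simpa using hb z)
  have htv' : μp univ + μn univ = 1 := by rw [← htv]; rfl
  have hC : 0 ≤ C := le_trans (abs_nonneg _) (hb 0)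
  have hsum : (μp univ).toReal + (μn univ).toReal = 1 := by
    rw [← ENNReal.toReal_add (measure_ne_top _ _) (measure_ne_top _ _), htv']; simp
  rw [Real.norm_eq_abs, abs_le] at hp hn
  unfold signedIntegral
  nlinarith [hp.1, hp.2, hn.1, hn.2]

lemma smul_toNNReal_signedMeasure {r : ℝ} (hr : 0 ≤ r) (v : SignedMeasure ℝ) :
    r.toNNReal • v = r • v := by
  ext i hi
  rw [VectorMeasure.smul_apply, VectorMeasure.smul_apply, NNReal.smul_def,
    Real.coe_toNNReal r hr]

lemma dirac_toSigned_map (a : ℝ) :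
    (Measure.dirac a).toSignedMeasure.map (fun z : ℝ => -z)
      = (Measure.dirac (-a)).toSignedMeasure := by
  ext i hi
  rw [VectorMeasure.map_apply _ measurable_neg hi,
    Measure.toSignedMeasure_apply_measurable (hi.preimage measurable_neg),
    Measure.toSignedMeasure_apply_measurable hi]
  apply congrArg ENNReal.toReal
  rw [Measure.dirac_apply' _ (hi.preimage measurable_neg), Measure.dirac_apply' _ hi]
  by_cases h : -a ∈ i
  · rw [Set.indicator_of_mem (by simpa [Set.mem_neg] using h), Set.indicator_of_mem h]; rfl
  · rw [Set.indicator_of_notMem (by simpa [Set.mem_neg] using h), Set.indicator_of_notMem h]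

lemma cont_n : Continuous stdNormalDensity := by
  unfold stdNormalDensity
  exact continuous_const.mul (Real.continuous_exp.comp (by continuity))

lemma cont_f : Continuous fun z : ℝ => z ^ 2 * stdNormalDensity z :=
  (continuous_pow 2).mul cont_n

lemma bdd_n (z : ℝ) : |stdNormalDensity z| ≤ (Real.sqrt (2 * Real.pi))⁻¹ := by
  have hπ : 0 < Real.sqrt (2 * Real.pi) := Real.sqrt_pos.2 (by positivity)
  have h1 : Real.exp (-z ^ 2 / 2) ≤ 1 := by
    rw [Real.exp_le_one_iff]; nlinarith [sq_nonneg z]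
  have h0 : 0 < Real.exp (-z ^ 2 / 2) := Real.exp_pos _
  rw [stdNormalDensity, abs_of_nonneg (by positivity)]
  nlinarith [inv_pos.2 hπ]

lemma bdd_f (z : ℝ) : |z ^ 2 * stdNormalDensity z|
    ≤ (Real.sqrt (2 * Real.pi))⁻¹ * (2 * Real.exp (-1)) := by
  have hπ : 0 < Real.sqrt (2 * Real.pi) := Real.sqrt_pos.2 (by positivity)
  have h2 := aux_u_exp (z ^ 2)
  have h3 : z ^ 2 * stdNormalDensity z
      = (Real.sqrt (2 * Real.pi))⁻¹ * (z ^ 2 * Real.exp (-z ^ 2 / 2)) := by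
    rw [stdNormalDensity]; ring
  rw [h3, abs_mul, abs_of_nonneg (by positivity : (0:ℝ) ≤ (Real.sqrt (2 * Real.pi))⁻¹),
    abs_of_nonneg (by positivity)]
  exact mul_le_mul_of_nonneg_left h2 (by positivity)

/-- Among symmetric, vega-neutral, unit total-variation signed
measures, `∫ z² n(z) ω(dz) ≤ (2/√(2π)) e^{-z₀²/2}`, with equality for the
vega-weighted butterfly `ω = x₀ δ_{z₀} + x₀ δ_{−z₀} − (1−2x₀) δ₀`,
`x₀ = 1/(2(1+e^{-z₀²/2}))`, where `z₀` is the unique positive solution of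
`(z₀²/2)e^{z₀²/2} = e^{z₀²/2} + 1`. -/
theorem butterfly_optimal_among_symmetric
    (z₀ : ℝ) (hz₀_pos : 0 < z₀)
    (hz₀_eq : (z₀ ^ 2 / 2) * Real.exp (z₀ ^ 2 / 2) = Real.exp (z₀ ^ 2 / 2) + 1)
    (x₀ : ℝ) (hx₀ : x₀ = 1 / (2 * (1 + Real.exp (-z₀ ^ 2 / 2)))) :
    (∀ ω : SignedMeasure ℝ,
      ω.map (fun z : ℝ => -z) = ω →
      ω.totalVariation univ = 1 →
      signedIntegral stdNormalDensity ω = 0 →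
      signedIntegral (fun z => z ^ 2 * stdNormalDensity z) ω ≤
        2 / Real.sqrt (2 * Real.pi) * Real.exp (-z₀ ^ 2 / 2)) ∧
    (∀ ωBF : SignedMeasure ℝ,
      ωBF = x₀ • (Measure.dirac z₀).toSignedMeasure
            + x₀ • (Measure.dirac (-z₀)).toSignedMeasure
            - (1 - 2 * x₀) • (Measure.dirac (0:ℝ)).toSignedMeasure →
      ωBF.map (fun z : ℝ => -z) = ωBF ∧
      ωBF.totalVariation univ = 1 ∧
      signedIntegral stdNormalDensity ωBF = 0 ∧
      signedIntegral (fun z => z ^ 2 * stdNormalDensity z) ωBF =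
        2 / Real.sqrt (2 * Real.pi) * Real.exp (-z₀ ^ 2 / 2)) := by
  have hπ : 0 < Real.sqrt (2 * Real.pi) := Real.sqrt_pos.2 (by positivity)
  set S : ℝ := Real.sqrt (2 * Real.pi) with hS
  set E : ℝ := Real.exp (-z₀ ^ 2 / 2) with hEdef
  have hE : 0 < E := Real.exp_pos _
  have hPE : Real.exp (z₀ ^ 2 / 2) * E = 1 := by
    rw [hEdef, ← Real.exp_add]; ring_nf; exact Real.exp_zero
  -- main transcendental identity: z₀²/2 = 1 + E
  have htE : z₀ ^ 2 / 2 = 1 + E := by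
    linear_combination E * hz₀_eq - (z₀ ^ 2 / 2 - 1) * hPE
  have ht : z₀ ^ 2 / 2 = 1 + Real.exp (-z₀ ^ 2 / 2) := by
    have h := htE; rw [hEdef] at h; exact h
  have h1E : (1:ℝ) + E ≠ 0 := by positivity
  have hx₀' : x₀ * (2 * (1 + E)) = 1 := by
    rw [hx₀]; field_simp
  have hx0 : 0 < x₀ := by nlinarith
  have hy : 0 < 1 - 2 * x₀ := by nlinarith
  constructor
  · -- optimality
    intro ω _ htv hvega
    set c : ℝ := z₀ ^ 2 - 2 with hc
    set g : ℝ → ℝ := fun z => z ^ 2 * stdNormalDensity z - c * stdNormalDensity z with hg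
    have hbg : ∀ z, |g z| ≤ 2 / S * E := by
      intro z
      have hkey := aux_pointwise (z₀ ^ 2) ht (z ^ 2) (sq_nonneg z)
      have heq : g z = S⁻¹ * ((z ^ 2 - (z₀ ^ 2 - 2)) * Real.exp (-z ^ 2 / 2)) := by
        simp only [hg, stdNormalDensity, hc]; ring
      rw [heq, abs_mul, abs_of_nonneg (by positivity : (0:ℝ) ≤ S⁻¹)]
      calc S⁻¹ * |(z ^ 2 - (z₀ ^ 2 - 2)) * Real.exp (-z ^ 2 / 2)|
          ≤ S⁻¹ * (2 * Real.exp (-z₀ ^ 2 / 2)) :=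
            mul_le_mul_of_nonneg_left hkey (by positivity)
        _ = 2 / S * E := by rw [← hEdef]; ring
    have hsplit : signedIntegral (fun z => z ^ 2 * stdNormalDensity z) ω
        = signedIntegral g ω + c * signedIntegral stdNormalDensity ω := by
      unfold signedIntegral
      rw [hg]
      rw [integral_sub (integrable_of_bdd cont_f bdd_f)
          ((integrable_of_bdd cont_n bdd_n).const_mul c),
        integral_sub (integrable_of_bdd cont_f bdd_f)
          ((integrable_of_bdd cont_n bdd_n).const_mul c),
        integral_const_mul, integral_const_mul]
      ring
    rw [hsplit, hvega, mul_zero, add_zero]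
    exact signedIntegral_le_of_bound ω g _ hbg htv
  · -- the butterfly
    intro ωBF hω
    have hz0' : z₀ ≠ 0 := hz₀_pos.ne'
    have hsing : (x₀.toNNReal • Measure.dirac z₀ + x₀.toNNReal • Measure.dirac (-z₀))
        ⟂ₘ ((1 - 2 * x₀).toNNReal • Measure.dirac (0:ℝ)) := by
      refine ⟨{0}, measurableSet_singleton 0, ?_, ?_⟩
      · simp [Measure.dirac_apply' _ (measurableSet_singleton (0:ℝ)),
          Set.indicator_apply, hz0', neg_eq_zero]
      · simp [Measure.dirac_apply' _ (measurableSet_singleton (0:ℝ)).compl]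
    let j : JordanDecomposition ℝ :=
      ⟨x₀.toNNReal • Measure.dirac z₀ + x₀.toNNReal • Measure.dirac (-z₀),
        (1 - 2 * x₀).toNNReal • Measure.dirac (0:ℝ), hsing⟩
    have hts : ωBF = j.toSignedMeasure := by
      rw [hω]
      show _ = (x₀.toNNReal • Measure.dirac z₀
          + x₀.toNNReal • Measure.dirac (-z₀)).toSignedMeasure
          - ((1 - 2 * x₀).toNNReal • Measure.dirac (0:ℝ)).toSignedMeasure
      rw [Measure.toSignedMeasure_add, Measure.toSignedMeasure_smul,
        Measure.toSignedMeasure_smul, Measure.toSignedMeasure_smul,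
        smul_toNNReal_signedMeasure hx0.le, smul_toNNReal_signedMeasure hx0.le,
        smul_toNNReal_signedMeasure hy.le]
    have hjd : ωBF.toJordanDecomposition = j := SignedMeasure.toJordanDecomposition_eq hts
    have hsub : ∀ a b : SignedMeasure ℝ,
        (a - b).map (fun z : ℝ => -z) = a.map (fun z : ℝ => -z) - b.map (fun z : ℝ => -z) :=
      fun a b => (VectorMeasure.mapGm (M := ℝ) (fun z : ℝ => -z)).map_sub a b
    -- integrals against the butterfly
    have hInt : ∀ f : ℝ → ℝ, Continuous f → (∀ C : ℝ, (∀ z, |f z| ≤ C) →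
        signedIntegral f ωBF = x₀ * f z₀ + x₀ * f (-z₀) - (1 - 2 * x₀) * f 0) := by
      intro f hcont C hb
      unfold signedIntegral
      rw [hjd]
      show (∫ x, f x ∂(x₀.toNNReal • Measure.dirac z₀ + x₀.toNNReal • Measure.dirac (-z₀)))
          - (∫ x, f x ∂((1 - 2 * x₀).toNNReal • Measure.dirac (0:ℝ))) = _
      rw [integral_add_measure (integrable_of_bdd hcont hb) (integrable_of_bdd hcont hb)]
      rw [integral_smul_nnreal_measure, integral_smul_nnreal_measure,
        integral_smul_nnreal_measure, integral_dirac, integral_dirac, integral_dirac]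
      simp [NNReal.smul_def, Real.coe_toNNReal _ hx0.le, Real.coe_toNNReal _ hy.le]
    refine ⟨?_, ?_, ?_, ?_⟩
    · -- symmetry
      rw [hω, hsub, VectorMeasure.map_add, VectorMeasure.map_smul, VectorMeasure.map_smul,
        VectorMeasure.map_smul, dirac_toSigned_map, dirac_toSigned_map, dirac_toSigned_map,
        neg_neg, neg_zero]
      abel
    · -- total variation
      rw [SignedMeasure.totalVariation, hjd]
      show ((x₀.toNNReal • Measure.dirac z₀ + x₀.toNNReal • Measure.dirac (-z₀))
          + (1 - 2 * x₀).toNNReal • Measure.dirac (0:ℝ)) univ = 1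
      simp only [Measure.coe_add, Pi.add_apply, Measure.smul_apply, measure_univ,
        smul_eq_mul, mul_one, ENNReal.smul_def]
      rw [← ENNReal.coe_add, ← ENNReal.coe_add,
        ← Real.toNNReal_add hx0.le hx0.le,
        ← Real.toNNReal_add (by linarith) hy.le]
      have : x₀ + x₀ + (1 - 2 * x₀) = 1 := by ring
      rw [this]
      simp
    · -- vega neutrality
      rw [hInt stdNormalDensity cont_n _ bdd_n]
      have h1 : stdNormalDensity z₀ = S⁻¹ * E := rfl
      have h2 : stdNormalDensity (-z₀) = S⁻¹ * E := by
        rw [stdNormalDensity]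
        rw [show (-z₀) ^ 2 = z₀ ^ 2 by ring]

      have h3 : stdNormalDensity 0 = S⁻¹ := by
        rw [stdNormalDensity, show -(0:ℝ) ^ 2 / 2 = 0 by norm_num, Real.exp_zero, mul_one]
      rw [h1, h2, h3]
      linear_combination S⁻¹ * hx₀'
    · -- the value
      rw [hInt (fun z => z ^ 2 * stdNormalDensity z) cont_f _ bdd_f]
      have h1 : stdNormalDensity z₀ = S⁻¹ * E := rfl
      have h2 : stdNormalDensity (-z₀) = S⁻¹ * E := by
        rw [stdNormalDensity]
        rw [show (-z₀) ^ 2 = z₀ ^ 2 by ring]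

      have hxz2 : x₀ * z₀ ^ 2 = 1 := by
        have hz2 : z₀ ^ 2 = 2 * (1 + E) := by linarith [htE]
        rw [hz2]; exact hx₀'
      simp only [h1, h2]
      rw [show (-z₀) ^ 2 = z₀ ^ 2 by ring]
      norm_num
      linear_combination (2 * S⁻¹ * E) * hxz2
end
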